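/- Let G be a graph whose vertex set is partitioned into a clique K and an independent set S with |K| = |S| = k and K complete to S, where k is even. Then there exists a triangle packing of size binom(k,2) using all edges inside K, such that the edges not used by the packing form a star with center in S whose leaves are all vertices of K; moreover, the center vertex of this star can be chosen arbitrarily in S. -/

import Mathlib

open Finset

/-- A triangle in `G`: a 3-element vertex set that is a clique. -/
def IsTriangle {V : Type*} (G : SimpleGraph V) (t : Finset V) : Prop :=
  t.card = 3 ∧ G.IsClique ↑t

/-- A triangle packing: a family of pairwise edge-disjoint triangles. -/
def IsTrianglePacking {V : Type*} [DecidableEq V] (G : SimpleGraph V)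
    (P : Finset (Finset V)) : Prop :=
  (∀ t ∈ P, IsTriangle G t) ∧
    ∀ t₁ ∈ P, ∀ t₂ ∈ P, t₁ ≠ t₂ → (t₁ ∩ t₂).card ≤ 1

/-- A triangle hitting set: a set of edges of `G` meeting every triangle of `G`. -/
def IsTriangleHitting {V : Type*} [Fintype V] [DecidableEq V] (G : SimpleGraph V)
    [DecidableRel G.Adj] (H : Finset (Sym2 V)) : Prop :=
  H ⊆ G.edgeFinset ∧
    ∀ t : Finset V, IsTriangle G t → ∃ e ∈ H, ∀ v ∈ e, v ∈ t

/-- The minimum size of a triangle hitting set, `τ(G)`. -/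
noncomputable def triTau {V : Type*} [Fintype V] [DecidableEq V] (G : SimpleGraph V)
    [DecidableRel G.Adj] : ℕ :=
  sInf {n | ∃ H : Finset (Sym2 V), IsTriangleHitting G H ∧ H.card = n}

/-- The maximum size of a triangle packing, `μ(G)`. -/
noncomputable def triMu {V : Type*} [Fintype V] [DecidableEq V] (G : SimpleGraph V) : ℕ :=
  sSup {n | ∃ P : Finset (Finset V), IsTrianglePacking G P ∧ P.card = n}

/-- A set of edges forming a matching (pairwise vertex-disjoint edges). -/
def IsMatchingSet {V : Type*} (M : Finset (Sym2 V)) : Prop :=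
  ∀ e₁ ∈ M, ∀ e₂ ∈ M, e₁ ≠ e₂ → ∀ v : V, v ∈ e₁ → v ∉ e₂

/-- A threshold representation of a graph `G`: the `c i` form a clique with nested
closed neighbourhoods, the `u j` form an independent set with nested neighbourhoods,
and together they partition the vertex set. -/
structure ThresholdRep {V : Type*} (G : SimpleGraph V) where
  k : ℕ
  s : ℕ
  c : Fin k → V
  u : Fin s → V
  inj_c : Function.Injective c
  inj_u : Function.Injective u
  disj : ∀ i j, c i ≠ u j
  cover : ∀ v : V, (∃ i, v = c i) ∨ (∃ j, v = u j)
  clique : ∀ i j, i ≠ j → G.Adj (c i) (c j)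
  indep : ∀ i j, ¬ G.Adj (u i) (u j)
  nestedK : ∀ (i : Fin k) (h : i.val + 1 < k),
    (insert (c ⟨i.val + 1, h⟩) (G.neighborSet (c ⟨i.val + 1, h⟩)) : Set V) ⊆
      insert (c i) (G.neighborSet (c i))
  nestedS : ∀ (j : Fin s) (h : j.val + 1 < s),
    G.neighborSet (u j) ⊆ G.neighborSet (u ⟨j.val + 1, h⟩)

/-- A co-chain representation of a graph `G`: two cliques `c` and `d` partitioning the
vertex set, with nested closed neighbourhoods along each ordering. -/
structure CoChainRep {V : Type*} (G : SimpleGraph V) where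
  n : ℕ
  m : ℕ
  c : Fin n → V
  d : Fin m → V
  inj_c : Function.Injective c
  inj_d : Function.Injective d
  disj : ∀ i j, c i ≠ d j
  cover : ∀ v : V, (∃ i, v = c i) ∨ (∃ j, v = d j)
  clique1 : ∀ i j, i ≠ j → G.Adj (c i) (c j)
  clique2 : ∀ i j, i ≠ j → G.Adj (d i) (d j)
  nested1 : ∀ (i : Fin n) (h : i.val + 1 < n),
    (insert (c ⟨i.val + 1, h⟩) (G.neighborSet (c ⟨i.val + 1, h⟩)) : Set V) ⊆
      insert (c i) (G.neighborSet (c i))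
  nested2 : ∀ (i : Fin m) (h : i.val + 1 < m),
    (insert (d i) (G.neighborSet (d i)) : Set V) ⊆
      insert (d ⟨i.val + 1, h⟩) (G.neighborSet (d ⟨i.val + 1, h⟩))

namespace CSPE

set_option linter.unusedSectionVars false

def half (n : ℕ) : ZMod n := ((n+1)/2 : ℕ)

lemma two_mul_half {n : ℕ} (hn : Odd n) : (2 : ZMod n) * half n = 1 := by
  have h : 2 * ((n+1)/2) = n + 1 := by obtain ⟨m, rfl⟩ := hn; omega
  have h2 : ((2 * ((n+1)/2) : ℕ) : ZMod n) = ((n + 1 : ℕ) : ZMod n) := by rw [h]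
  push_cast at h2
  simpa [ZMod.natCast_self, half] using h2

def pr {n : ℕ} [NeZero n] (r : ZMod n) (a : Fin (n+1)) : Fin (n+1) :=
  if a = Fin.last n then ⟨r.val, Nat.lt_succ_of_lt (ZMod.val_lt r)⟩
  else if ((a : ℕ) : ZMod n) = r then Fin.last n
  else ⟨(2*r - ((a : ℕ) : ZMod n)).val, Nat.lt_succ_of_lt (ZMod.val_lt _)⟩

def col {n : ℕ} (a b : Fin (n+1)) : ZMod n :=
  if a = Fin.last n then ((b : ℕ) : ZMod n)
  else if b = Fin.last n then ((a : ℕ) : ZMod n)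
  else half n * (((a:ℕ) : ZMod n) + ((b:ℕ) : ZMod n))

variable {n : ℕ} [NeZero n]

lemma val_lt_of_ne_last {a : Fin (n+1)} (h : a ≠ Fin.last n) : (a : ℕ) < n := by
  have := a.isLt
  rcases Nat.lt_or_ge (a : ℕ) n with h' | h'
  · exact h'
  · exact absurd (Fin.ext (by omega : (a : ℕ) = n)) h

lemma cast_inj_of_ne_last {a b : Fin (n+1)} (ha : a ≠ Fin.last n) (hb : b ≠ Fin.last n)
    (h : ((a : ℕ) : ZMod n) = ((b : ℕ) : ZMod n)) : a = b := by
  have h1 := ZMod.val_cast_of_lt (val_lt_of_ne_last ha)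
  have h2 := ZMod.val_cast_of_lt (val_lt_of_ne_last hb)
  have := congrArg ZMod.val h
  rw [h1, h2] at this
  exact Fin.ext this

lemma col_comm (a b : Fin (n+1)) : col a b = col b a := by
  unfold col
  by_cases h1 : a = Fin.last n <;> by_cases h2 : b = Fin.last n <;>
    simp [h1, h2] <;> ring

lemma cancel_two (hn : Odd n) {x y : ZMod n} (h : 2 * x = 2 * y) : x = y := by
  have h' := congrArg (fun z => half n * z) h
  simp only [← mul_assoc, mul_comm (half n) 2, two_mul_half hn, one_mul] at h'
  exact h'

lemma pr_ne (hn : Odd n) (r : ZMod n) (a : Fin (n+1)) : pr r a ≠ a := by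
  unfold pr
  split_ifs with h1 h2
  · intro h; rw [h1] at h
    have := congrArg Fin.val h
    simp [Fin.last] at this
    exact absurd this (Nat.ne_of_lt (ZMod.val_lt r))
  · intro h; exact h1 h.symm
  · intro h
    have hval : (2*r - ((a : ℕ) : ZMod n)).val = (a : ℕ) := congrArg Fin.val h
    have hlt : (a : ℕ) < n := val_lt_of_ne_last h1
    have heq : (2*r - ((a : ℕ) : ZMod n)) = ((a : ℕ) : ZMod n) := by
      apply ZMod.val_injective
      rw [hval, ZMod.val_cast_of_lt hlt]
    have h2r : 2 * r = 2 * ((a : ℕ) : ZMod n) := by linear_combination heq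
    exact h2 (cancel_two hn h2r).symm

lemma pr_last_ne (r : ZMod n) :
    (⟨r.val, Nat.lt_succ_of_lt (ZMod.val_lt r)⟩ : Fin (n+1)) ≠ Fin.last n := by
  intro h
  have := congrArg Fin.val h
  simp [Fin.last] at this
  exact absurd this (Nat.ne_of_lt (ZMod.val_lt r))

lemma col_pr (hn : Odd n) (r : ZMod n) (a : Fin (n+1)) : col a (pr r a) = r := by
  by_cases h1 : a = Fin.last n
  · rw [pr, if_pos h1, col, if_pos h1]
    simp only [ZMod.val_cast_of_lt (ZMod.val_lt r)]
    exact ZMod.natCast_rightInverse r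
  · by_cases h2 : ((a : ℕ) : ZMod n) = r
    · rw [pr, if_neg h1, if_pos h2, col, if_neg h1, if_pos rfl]
      exact h2
    · rw [pr, if_neg h1, if_neg h2, col, if_neg h1, if_neg (pr_last_ne _)]
      have hcast : ((((2*r - ((a : ℕ) : ZMod n)).val : ℕ)) : ZMod n)
          = 2*r - ((a : ℕ) : ZMod n) := ZMod.natCast_rightInverse _
      show half n * (((a:ℕ) : ZMod n) + _) = r
      rw [hcast]
      have : ((a:ℕ) : ZMod n) + (2*r - ((a:ℕ) : ZMod n)) = 2 * r := by ring
      rw [this, ← mul_assoc, mul_comm (half n) 2, two_mul_half hn, one_mul]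

lemma pr_col (hn : Odd n) {a b : Fin (n+1)} (hab : a ≠ b) : pr (col a b) a = b := by
  by_cases h1 : a = Fin.last n
  · have hb : b ≠ Fin.last n := by rw [h1] at hab; exact fun h => hab h.symm
    rw [col, if_pos h1, pr, if_pos h1]
    apply Fin.ext
    simp [ZMod.val_cast_of_lt (val_lt_of_ne_last hb)]
  · by_cases h2 : b = Fin.last n
    · rw [col, if_neg h1, if_pos h2, pr, if_neg h1, if_pos rfl, h2]
    · rw [col, if_neg h1, if_neg h2, pr, if_neg h1]
      have hne : ¬ ((a:ℕ) : ZMod n) = half n * (((a:ℕ):ZMod n) + ((b:ℕ):ZMod n)) := by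
        intro h
        have h' : 2 * ((a:ℕ) : ZMod n)
            = 2 * (half n * (((a:ℕ):ZMod n) + ((b:ℕ):ZMod n))) := by rw [← h]
        rw [← mul_assoc, mul_comm 2 (half n), mul_comm (half n) 2, two_mul_half hn, one_mul] at h'
        have hab' : ((a:ℕ) : ZMod n) = ((b:ℕ) : ZMod n) := by linear_combination h'
        exact hab (cast_inj_of_ne_last h1 h2 hab')
      rw [if_neg hne]
      apply Fin.ext
      have hsimp : 2 * (half n * (((a:ℕ):ZMod n) + ((b:ℕ):ZMod n))) - ((a:ℕ):ZMod n)
          = ((b:ℕ):ZMod n) := by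
        rw [← mul_assoc, two_mul_half hn, one_mul]; ring
      show (2 * (half n * (((a:ℕ):ZMod n) + ((b:ℕ):ZMod n))) - ((a:ℕ):ZMod n)).val = (b : ℕ)
      rw [hsimp]
      exact ZMod.val_cast_of_lt (val_lt_of_ne_last h2)

lemma card_filter_lt (m : ℕ) :
    ((univ : Finset (Fin m × Fin m)).filter fun p => p.1 < p.2).card = m.choose 2 := by
  have hpc := Finset.card_powersetCard 2 (univ : Finset (Fin m))
  rw [Finset.card_univ, Fintype.card_fin] at hpc
  rw [← hpc]
  apply Finset.card_nbij (i := fun p => ({p.1, p.2} : Finset (Fin m)))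
  · intro p hp
    simp only [mem_coe, mem_filter, mem_univ, true_and] at hp
    simp [Finset.mem_powersetCard_univ, Finset.card_pair (ne_of_lt hp)]
  · intro p hp q hq h
    simp only [coe_filter, Set.mem_setOf_eq, mem_univ, true_and] at hp hq
    simp only at h
    have h1 : p.1 ∈ ({q.1, q.2} : Finset (Fin m)) := by rw [← h]; simp
    have h2 : p.2 ∈ ({q.1, q.2} : Finset (Fin m)) := by rw [← h]; simp
    have h3 : q.1 ∈ ({p.1, p.2} : Finset (Fin m)) := by rw [h]; simp
    simp only [mem_insert, mem_singleton] at h1 h2 h3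
    have : p.1 = q.1 ∧ p.2 = q.2 := by
      rcases h1 with h1 | h1 <;> rcases h2 with h2 | h2 <;> rcases h3 with h3 | h3 <;>
        constructor <;> omega
    exact Prod.ext this.1 this.2
  · intro t ht
    simp only [Finset.mem_coe, Finset.mem_powersetCard_univ] at ht
    obtain ⟨a, b, hab, rfl⟩ := Finset.card_eq_two.mp ht
    rcases lt_or_gt_of_ne hab with h | h
    · exact ⟨(a, b), by simp [h], rfl⟩
    · exact ⟨(b, a), by simp [h], Finset.pair_comm b a⟩

end CSPE

/-- In a complete split graph with clique `K` and independent set `S` of equal even size `k`,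
for every prescribed center `s₀ ∈ S` there is a triangle packing of size `k choose 2`
using all edges inside `K` whose unused edges form the star with center `s₀` and leaf
set `K`. -/
theorem complete_split_packing_even {V : Type*} [Fintype V] [DecidableEq V]
    (G : SimpleGraph V) [DecidableRel G.Adj] (K S : Finset V) (k : ℕ) (heven : Even k)
    (hdisj : Disjoint K S) (hcover : K ∪ S = Finset.univ)
    (hK : G.IsClique ↑K) (hS : ∀ u ∈ S, ∀ v ∈ S, ¬ G.Adj u v)
    (hcomp : ∀ u ∈ K, ∀ v ∈ S, G.Adj u v)
    (hKcard : K.card = k) (hScard : S.card = k)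
    (s₀ : V) (hs₀ : s₀ ∈ S) :
    ∃ P : Finset (Finset V), IsTrianglePacking G P ∧ P.card = k.choose 2 ∧
      (∀ a ∈ K, ∀ b ∈ K, a ≠ b → ∃ t ∈ P, a ∈ t ∧ b ∈ t) ∧
      (∀ e ∈ G.edgeFinset,
        ((∃ a ∈ K, e = s(s₀, a)) ↔ ¬ ∃ t ∈ P, ∀ v ∈ e, v ∈ t)) := by
  classical
  have hk2 : 2 ≤ k := by
    have hpos : 0 < S.card := Finset.card_pos.mpr ⟨s₀, hs₀⟩
    obtain ⟨m, hm⟩ := heven; omega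
  obtain ⟨n, rfl⟩ : ∃ n, k = n + 1 := ⟨k - 1, by omega⟩
  have hn : Odd n := by obtain ⟨m, hm⟩ := heven; exact ⟨m - 1, by omega⟩
  haveI : NeZero n := ⟨by omega⟩
  have hSecard : (S.erase s₀).card = n := by rw [Finset.card_erase_of_mem hs₀, hScard]; omega
  set e1 := K.equivFinOfCardEq hKcard with he1
  set e2 := (S.erase s₀).equivFinOfCardEq hSecard with he2
  set c : Fin (n+1) → V := fun i => (e1.symm i : V) with hcdef
  set σ : ZMod n → V := fun r => ((e2.symm ⟨r.val, ZMod.val_lt r⟩ : _) : V) with hσdef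
  -- basic facts
  have hcmem : ∀ i, c i ∈ K := fun i => (e1.symm i).2
  have hcinj : Function.Injective c := fun i j h =>
    e1.symm.injective (Subtype.ext h)
  have hcsurj : ∀ x ∈ K, ∃ i, x = c i := by
    intro x hx
    exact ⟨e1 ⟨x, hx⟩, by simp [hcdef]⟩
  have hσmem : ∀ r, σ r ∈ S.erase s₀ := fun r => (e2.symm _).2
  have hσS : ∀ r, σ r ∈ S := fun r => Finset.mem_of_mem_erase (hσmem r)
  have hσs₀ : ∀ r, σ r ≠ s₀ := fun r => Finset.ne_of_mem_erase (hσmem r)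
  have hσinj : Function.Injective σ := by
    intro r r' h
    have := e2.symm.injective (Subtype.ext h)
    have hv : r.val = r'.val := congrArg Fin.val this
    exact ZMod.val_injective n hv
  have hσsurj : ∀ y ∈ S.erase s₀, ∃ r, y = σ r := by
    intro y hy
    refine ⟨(((e2 ⟨y, hy⟩ : Fin n) : ℕ) : ZMod n), ?_⟩
    have hvl : ((((e2 ⟨y, hy⟩ : Fin n) : ℕ) : ZMod n)).val = ((e2 ⟨y, hy⟩ : Fin n) : ℕ) :=
      ZMod.val_cast_of_lt (e2 ⟨y, hy⟩).isLt
    have heq : (⟨(((e2 ⟨y, hy⟩ : Fin n) : ℕ) : ZMod n).val, ZMod.val_lt _⟩ : Fin n)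
        = e2 ⟨y, hy⟩ := Fin.ext hvl
    simp only [hσdef, heq, Equiv.symm_apply_apply]
  have hcσ : ∀ i r, c i ≠ σ r := by
    intro i r h
    exact (Finset.disjoint_left.mp hdisj (hcmem i)) (h ▸ hσS r)
  -- triangles
  set T : Fin (n+1) → Fin (n+1) → Finset V :=
    fun i j => {c i, c j, σ (CSPE.col i j)} with hTdef
  have hTmem : ∀ i j x, x ∈ T i j ↔ x = c i ∨ x = c j ∨ x = σ (CSPE.col i j) := by
    intro i j x; simp [hTdef]
  have hTcomm : ∀ i j, T i j = T j i := by
    intro i j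
    simp only [hTdef]
    rw [CSPE.col_comm j i, Finset.insert_comm]
  set P : Finset (Finset V) :=
    ((univ : Finset (Fin (n+1) × Fin (n+1))).filter fun p => p.1 < p.2).image
      (fun p => T p.1 p.2) with hPdef
  have hPmem : ∀ t, t ∈ P ↔ ∃ i j, i < j ∧ T i j = t := by
    intro t
    simp only [hPdef, Finset.mem_image, Finset.mem_filter, Finset.mem_univ, true_and,
      Prod.exists]
  have hTP : ∀ i j, i ≠ j → T i j ∈ P := by
    intro i j hij
    rcases lt_or_gt_of_ne hij with h | h
    · exact (hPmem _).mpr ⟨i, j, h, rfl⟩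
    · exact (hPmem _).mpr ⟨j, i, h, (hTcomm i j).symm⟩
  -- shared vertex classification
  have hshared : ∀ i j i' j' x, x ∈ T i j → x ∈ T i' j' →
      (x = σ (CSPE.col i j) ∧ CSPE.col i j = CSPE.col i' j') ∨
      (∃ v, (v = i ∨ v = j) ∧ (v = i' ∨ v = j') ∧ x = c v) := by
    intro i j i' j' x hx1 hx2
    rw [hTmem] at hx1 hx2
    rcases hx1 with rfl | rfl | rfl
    · rcases hx2 with h | h | h
      · exact Or.inr ⟨i, Or.inl rfl, Or.inl (hcinj h), rfl⟩
      · exact Or.inr ⟨i, Or.inl rfl, Or.inr (hcinj h), rfl⟩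
      · exact absurd h (hcσ _ _)
    · rcases hx2 with h | h | h
      · exact Or.inr ⟨j, Or.inr rfl, Or.inl (hcinj h), rfl⟩
      · exact Or.inr ⟨j, Or.inr rfl, Or.inr (hcinj h), rfl⟩
      · exact absurd h (hcσ _ _)
    · rcases hx2 with h | h | h
      · exact absurd h.symm (hcσ _ _)
      · exact absurd h.symm (hcσ _ _)
      · exact Or.inl ⟨rfl, hσinj h⟩
  -- pair determination from one shared index and equal colours
  have hpair1 : ∀ i j i' j' (v : Fin (n+1)), i < j → i' < j' →
      CSPE.col i j = CSPE.col i' j' → (v = i ∨ v = j) → (v = i' ∨ v = j') →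
      i = i' ∧ j = j' := by
    intro i j i' j' v hij hij' hcol hv1 hv2
    have h1 : CSPE.pr (CSPE.col i j) i = j := CSPE.pr_col hn (ne_of_lt hij)
    have h2 : CSPE.pr (CSPE.col i j) j = i := by
      rw [CSPE.col_comm]; exact CSPE.pr_col hn (ne_of_lt hij).symm
    have h3 : CSPE.pr (CSPE.col i' j') i' = j' := CSPE.pr_col hn (ne_of_lt hij')
    have h4 : CSPE.pr (CSPE.col i' j') j' = i' := by
      rw [CSPE.col_comm]; exact CSPE.pr_col hn (ne_of_lt hij').symm
    rcases hv1 with rfl | rfl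
    · rcases hv2 with h | h
      · refine ⟨h, ?_⟩
        rw [← h1, hcol, h, h3]
      · -- v = i = j'
        have : i' = j := by rw [← h4, ← hcol, ← h]; exact h1
        exfalso; omega
    · rcases hv2 with h | h
      · -- v = j = i'
        have : j' = i := by rw [← h3, ← hcol, ← h]; exact h2
        exfalso; omega
      · refine ⟨?_, h⟩
        rw [← h2, hcol, h, h4]
  -- injectivity of T on ordered pairs
  have hTne : ∀ i j i' j', i < j → i' < j' → T i j = T i' j' → i = i' ∧ j = j' := by
    intro i j i' j' hij hij' h
    have hci : c i ∈ T i' j' := h ▸ (hTmem i j (c i)).mpr (Or.inl rfl)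
    have hcj : c j ∈ T i' j' := h ▸ (hTmem i j (c j)).mpr (Or.inr (Or.inl rfl))
    have hci' : c i' ∈ T i j := h ▸ (hTmem i' j' (c i')).mpr (Or.inl rfl)
    rw [hTmem] at hci hcj hci'
    have e1' : i = i' ∨ i = j' := by
      rcases hci with h' | h' | h'
      · exact Or.inl (hcinj h')
      · exact Or.inr (hcinj h')
      · exact absurd h' (hcσ _ _)
    have e2' : j = i' ∨ j = j' := by
      rcases hcj with h' | h' | h'
      · exact Or.inl (hcinj h')
      · exact Or.inr (hcinj h')
      · exact absurd h' (hcσ _ _)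
    have e3' : i' = i ∨ i' = j := by
      rcases hci' with h' | h' | h'
      · exact Or.inl (hcinj h')
      · exact Or.inr (hcinj h')
      · exact absurd h' (hcσ _ _)
    rcases e1' with h1 | h1 <;> rcases e2' with h2 | h2 <;> rcases e3' with h3 | h3 <;>
      exact ⟨by omega, by omega⟩
  refine ⟨P, ⟨?_, ?_⟩, ?_, ?_, ?_⟩
  · -- every t ∈ P is a triangle
    intro t ht
    obtain ⟨i, j, hij, rfl⟩ := (hPmem t).mp ht
    have hijne : i ≠ j := ne_of_lt hij
    have hne1 : c i ≠ c j := fun h => hijne (hcinj h)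
    constructor
    · rw [hTdef]
      rw [Finset.card_insert_of_notMem, Finset.card_insert_of_notMem, Finset.card_singleton]
      · simp [hcσ]
      · simp [hne1, hcσ]
    · intro x hx y hy hxy
      simp only [hTdef, Finset.coe_insert, Set.mem_insert_iff, Finset.coe_singleton,
        Set.mem_singleton_iff] at hx hy
      have adjKK : G.Adj (c i) (c j) := hK (hcmem i) (hcmem j) hne1
      have adjK1 : G.Adj (c i) (σ (CSPE.col i j)) := hcomp _ (hcmem i) _ (hσS _)
      have adjK2 : G.Adj (c j) (σ (CSPE.col i j)) := hcomp _ (hcmem j) _ (hσS _)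
      rcases hx with rfl | rfl | rfl <;> rcases hy with rfl | rfl | rfl <;>
        first
          | exact absurd rfl hxy
          | exact adjKK | exact adjKK.symm
          | exact adjK1 | exact adjK1.symm
          | exact adjK2 | exact adjK2.symm
  · -- edge-disjointness
    intro t₁ ht₁ t₂ ht₂ htne
    obtain ⟨i, j, hij, rfl⟩ := (hPmem t₁).mp ht₁
    obtain ⟨i', j', hij', rfl⟩ := (hPmem t₂).mp ht₂
    rw [Finset.card_le_one]
    intro x hx y hy
    by_contra hxy
    have hx1 := Finset.mem_inter.mp hx
    have hy1 := Finset.mem_inter.mp hy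
    have hcx := hshared i j i' j' x hx1.1 hx1.2
    have hcy := hshared i j i' j' y hy1.1 hy1.2
    rcases hcx with ⟨hxσ, hcol⟩ | ⟨v, hv1, hv2, rfl⟩
    · rcases hcy with ⟨hyσ, _⟩ | ⟨w, hw1, hw2, rfl⟩
      · exact hxy (hxσ.trans hyσ.symm)
      · obtain ⟨hii, hjj⟩ := hpair1 i j i' j' w hij hij' hcol hw1 hw2
        exact htne (by rw [hii, hjj])
    · rcases hcy with ⟨hyσ, hcol⟩ | ⟨w, hw1, hw2, rfl⟩
      · obtain ⟨hii, hjj⟩ := hpair1 i j i' j' v hij hij' hcol hv1 hv2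
        exact htne (by rw [hii, hjj])
      · have hvw : v ≠ w := fun h => hxy (by rw [h])
        have hpq : i = i' ∧ j = j' := by
          rcases hv1 with h1 | h1 <;> rcases hv2 with h2 | h2 <;>
            rcases hw1 with h3 | h3 <;> rcases hw2 with h4 | h4 <;>
            exact ⟨by omega, by omega⟩
        exact htne (by rw [hpq.1, hpq.2])
  · -- cardinality
    have hinj : Set.InjOn (fun p : Fin (n+1) × Fin (n+1) => T p.1 p.2)
        ((univ : Finset (Fin (n+1) × Fin (n+1))).filter fun p => p.1 < p.2) := by
      intro p hp q hq h
      simp only [coe_filter, Set.mem_setOf_eq, mem_univ, true_and] at hp hq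
      obtain ⟨h1, h2⟩ := hTne p.1 p.2 q.1 q.2 hp hq h
      exact Prod.ext h1 h2
    have hcard := Finset.card_image_of_injOn hinj
    rw [CSPE.card_filter_lt] at hcard
    exact hcard
  · -- all K-pairs covered
    intro a ha b hb hab
    obtain ⟨i, rfl⟩ := hcsurj a ha
    obtain ⟨j, rfl⟩ := hcsurj b hb
    have hij : i ≠ j := fun h => hab (by rw [h])
    exact ⟨T i j, hTP i j hij, (hTmem i j _).mpr (Or.inl rfl),
      (hTmem i j _).mpr (Or.inr (Or.inl rfl))⟩
  · -- unused edges are exactly the star at s₀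
    intro e he
    induction e using Sym2.ind with
    | _ x y =>
      have hadj : G.Adj x y := by rwa [SimpleGraph.mem_edgeFinset, SimpleGraph.mem_edgeSet] at he
      constructor
      · rintro ⟨a, haK, heq⟩ ⟨t, htP, hall⟩
        obtain ⟨i, j, hij, rfl⟩ := (hPmem t).mp htP
        have hs₀mem : s₀ ∈ s(x, y) := by
          rw [heq]; exact Sym2.mem_mk_left s₀ a
        have hmem := hall s₀ hs₀mem
        rw [hTmem] at hmem
        rcases hmem with h | h | h
        · exact (Finset.disjoint_left.mp hdisj (h ▸ hcmem i)) hs₀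
        · exact (Finset.disjoint_left.mp hdisj (h ▸ hcmem j)) hs₀
        · exact hσs₀ _ h.symm
      · intro hno
        by_contra hstar
        apply hno
        have hxKS : x ∈ K ∨ x ∈ S := by
          have := Finset.mem_univ x
          rw [← hcover, Finset.mem_union] at this; exact this
        have hyKS : y ∈ K ∨ y ∈ S := by
          have := Finset.mem_univ y
          rw [← hcover, Finset.mem_union] at this; exact this
        have hmemT : ∀ t : Finset V, x ∈ t → y ∈ t → ∀ v ∈ s(x, y), v ∈ t := by
          intro t hx hy v hv
          rcases Sym2.mem_iff.mp hv with rfl | rfl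
          · exact hx
          · exact hy
        rcases hxKS with hxK | hxS
        · rcases hyKS with hyK | hyS
          · -- both in K
            obtain ⟨i, rfl⟩ := hcsurj x hxK
            obtain ⟨j, rfl⟩ := hcsurj y hyK
            have hij : i ≠ j := fun h => hadj.ne (by rw [h])
            exact ⟨T i j, hTP i j hij,
              hmemT _ ((hTmem i j _).mpr (Or.inl rfl)) ((hTmem i j _).mpr (Or.inr (Or.inl rfl)))⟩
          · -- x ∈ K, y ∈ S
            have hys₀ : y ≠ s₀ := by
              intro h
              exact hstar ⟨x, hxK, by rw [h, Sym2.eq_swap]⟩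
            obtain ⟨r, rfl⟩ := hσsurj y (Finset.mem_erase.mpr ⟨hys₀, hyS⟩)
            obtain ⟨i, rfl⟩ := hcsurj x hxK
            have hprne : i ≠ CSPE.pr r i := (CSPE.pr_ne hn r i).symm
            refine ⟨T i (CSPE.pr r i), hTP _ _ hprne, hmemT _ ((hTmem _ _ _).mpr (Or.inl rfl)) ?_⟩
            rw [hTmem]
            exact Or.inr (Or.inr (by rw [CSPE.col_pr hn]))
        · rcases hyKS with hyK | hyS
          · -- x ∈ S, y ∈ K
            have hxs₀ : x ≠ s₀ := by
              intro h
              exact hstar ⟨y, hyK, by rw [h]⟩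
            obtain ⟨r, rfl⟩ := hσsurj x (Finset.mem_erase.mpr ⟨hxs₀, hxS⟩)
            obtain ⟨j, rfl⟩ := hcsurj y hyK
            have hprne : j ≠ CSPE.pr r j := (CSPE.pr_ne hn r j).symm
            refine ⟨T j (CSPE.pr r j), hTP _ _ hprne, hmemT _ ?_ ((hTmem _ _ _).mpr (Or.inl rfl))⟩
            rw [hTmem]
            exact Or.inr (Or.inr (by rw [CSPE.col_pr hn]))
          · exact absurd hadj (hS x hxS y hyS)
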